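/- (Beatty's theorem) Let α, β > 1 be irrational real numbers with 1/α + 1/β = 1. Then the sets {⌊nα⌋ : n ≥ 1} and {⌊nβ⌋ : n ≥ 1} are disjoint and their union is the set of all positive integers. -/

import Mathlib

lemma beatty_set_eq (r : ℝ) :
    {m : ℤ | ∃ n : ℕ, 0 < n ∧ ⌊(n : ℝ) * r⌋ = m} = {beattySeq r k | k > 0} := by
  ext m
  constructor
  · rintro ⟨n, hn, rfl⟩
    exact ⟨n, Int.natCast_pos.mpr hn, by simp [beattySeq]⟩
  · rintro ⟨k, hk, rfl⟩
    refine ⟨k.toNat, by omega, ?_⟩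
    rw [beattySeq]
    congr 2
    exact_mod_cast congrArg Int.cast (Int.toNat_of_nonneg hk.le)

/-- Beatty's theorem: if `α, β > 1` are irrational with `1/α + 1/β = 1`, then the
Beatty sequences `⌊nα⌋` and `⌊nβ⌋` partition the positive integers. -/
theorem beatty_theorem (α β : ℝ) (hα : 1 < α) (hβ : 1 < β)
    (hirrα : Irrational α) (hirrβ : Irrational β)
    (hsum : 1 / α + 1 / β = 1) :
    {m : ℤ | ∃ n : ℕ, 0 < n ∧ ⌊(n : ℝ) * α⌋ = m} ∩
      {m : ℤ | ∃ n : ℕ, 0 < n ∧ ⌊(n : ℝ) * β⌋ = m} = ∅ ∧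
    {m : ℤ | ∃ n : ℕ, 0 < n ∧ ⌊(n : ℝ) * α⌋ = m} ∪
      {m : ℤ | ∃ n : ℕ, 0 < n ∧ ⌊(n : ℝ) * β⌋ = m} = {m : ℤ | 0 < m} := by
  have hrs : α.HolderConjugate β := Real.holderConjugate_iff.mpr ⟨hα, by rw [← one_div, ← one_div]; exact hsum⟩
  rw [beatty_set_eq, beatty_set_eq]
  have hdisj : Disjoint {m : ℤ | ∃ k > 0, beattySeq α k = m}
      {m : ℤ | ∃ k > 0, beattySeq β k = m} := by
    rw [← hirrβ.beattySeq'_pos_eq]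
    rw [Set.disjoint_left]
    rintro m ⟨k, _, hk⟩ ⟨j, _, hj⟩
    have h1 : m ∈ {m : ℤ | ∃ k, beattySeq α k = m} := ⟨k, hk⟩
    have h2 : m ∈ {m : ℤ | ∃ k, beattySeq α k = m}ᶜ :=
      (compl_beattySeq hrs) ▸ ⟨j, hj⟩
    exact h2 h1
  constructor
  · exact Set.disjoint_iff_inter_eq_empty.mp hdisj
  · have h := hirrα.beattySeq_symmDiff_beattySeq_pos hrs
    rwa [hdisj.symmDiff_eq_sup] at h
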